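/- arXiv:1301.5580 — 3 statements merged into one kernel-verified Lean document; each statement's English description precedes it below -/
import Mathlib

section
/- The principal branch of the Lambert W function, defined by the power series W(z) = -∑_{n≥1} (n^{n-1}/n!)(-z)^n, satisfies W(z)·e^{W(z)} = z for all z in the disc |z| < 1/e. -/
set_option maxHeartbeats 1000000
set_option maxRecDepth 8000

open Finset

/-- Alternating sum of binomial coefficients times `k^s` vanishes when `s < n`. -/
lemma alt_sum_choose_pow_eq_zero : ∀ s n : ℕ, s < n →
    ∑ k ∈ Finset.range (n + 1), (-1 : ℂ) ^ k * (n.choose k : ℂ) * (k : ℂ) ^ s = 0 := by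
  intro s
  induction s using Nat.strong_induction_on with
  | _ s ih =>
    intro n hn
    match s, n, hn with
    | 0, n, hn =>
      have hne : n ≠ 0 := hn.ne'
      have h : (((∑ i ∈ range (n + 1), (-1 : ℤ) ^ i * (n.choose i : ℤ)) : ℤ) : ℂ) = 0 := by
        rw [Int.alternating_sum_range_choose, if_neg hne]
        simp
      push_cast at h
      simpa [pow_zero, mul_one] using h
    | s' + 1, n' + 1, hn =>
      have hs'n' : s' < n' := Nat.lt_of_succ_lt_succ hn
      rw [Finset.sum_range_succ']
      have h0 : (-1 : ℂ) ^ 0 * ((n' + 1).choose 0 : ℂ) * ((0 : ℕ) : ℂ) ^ (s' + 1) = 0 := by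
        simp
      rw [h0, add_zero]
      have step : ∀ j ∈ range (n' + 1),
          (-1 : ℂ) ^ (j + 1) * (((n' + 1).choose (j + 1) : ℕ) : ℂ) * (((j + 1 : ℕ)) : ℂ) ^ (s' + 1)
            = ∑ i ∈ range (s' + 1),
                (-((n' : ℂ) + 1)) * ((s'.choose i : ℂ) * ((-1 : ℂ) ^ j * (n'.choose j : ℂ) * (j : ℂ) ^ i)) := by
        intro j _
        have hch : (((n' + 1).choose (j + 1) : ℕ) : ℂ) * ((j : ℂ) + 1) = ((n' : ℂ) + 1) * (n'.choose j : ℂ) := by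
          have h2 := congrArg (Nat.cast (R := ℂ)) (Nat.add_one_mul_choose_eq n' j)
          push_cast at h2
          linear_combination -h2
        have hbin : ((j : ℂ) + 1) ^ s' = ∑ i ∈ range (s' + 1), (s'.choose i : ℂ) * (j : ℂ) ^ i := by
          rw [add_pow]
          exact Finset.sum_congr rfl fun i _ => by ring
        push_cast
        calc (-1 : ℂ) ^ (j + 1) * ((n' + 1).choose (j + 1) : ℂ) * ((j : ℂ) + 1) ^ (s' + 1)
            = (-(-1 : ℂ) ^ j) * ((((n' + 1).choose (j + 1) : ℕ) : ℂ) * ((j : ℂ) + 1)) * ((j : ℂ) + 1) ^ s' := by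
              ring
          _ = (-(-1 : ℂ) ^ j) * (((n' : ℂ) + 1) * (n'.choose j : ℂ)) *
                (∑ i ∈ range (s' + 1), (s'.choose i : ℂ) * (j : ℂ) ^ i) := by rw [hch, hbin]
          _ = ∑ i ∈ range (s' + 1),
                (-((n' : ℂ) + 1)) * ((s'.choose i : ℂ) * ((-1 : ℂ) ^ j * (n'.choose j : ℂ) * (j : ℂ) ^ i)) := by
              rw [Finset.mul_sum]
              exact Finset.sum_congr rfl fun i _ => by ring
      calc ∑ j ∈ range (n' + 1), (-1 : ℂ) ^ (j + 1) * (((n' + 1).choose (j + 1) : ℕ) : ℂ) * (((j + 1 : ℕ)) : ℂ) ^ (s' + 1)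
          = ∑ j ∈ range (n' + 1), ∑ i ∈ range (s' + 1),
              (-((n' : ℂ) + 1)) * ((s'.choose i : ℂ) * ((-1 : ℂ) ^ j * (n'.choose j : ℂ) * (j : ℂ) ^ i)) :=
            Finset.sum_congr rfl step
        _ = ∑ i ∈ range (s' + 1), ∑ j ∈ range (n' + 1),
              (-((n' : ℂ) + 1)) * ((s'.choose i : ℂ) * ((-1 : ℂ) ^ j * (n'.choose j : ℂ) * (j : ℂ) ^ i)) :=
            Finset.sum_comm
        _ = 0 := by
            refine Finset.sum_eq_zero fun i hi => ?_
            have hi' : i < n' := lt_of_le_of_lt (Nat.lt_succ_iff.mp (Finset.mem_range.mp hi)) hs'n'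
            have := ih i (Nat.lt_succ_of_le (Nat.lt_succ_iff.mp (Finset.mem_range.mp hi))) n' hi'
            have hfac : ∑ j ∈ range (n' + 1),
                  (-((n' : ℂ) + 1)) * ((s'.choose i : ℂ) * ((-1 : ℂ) ^ j * (n'.choose j : ℂ) * (j : ℂ) ^ i))
                = ((-((n' : ℂ) + 1)) * (s'.choose i : ℂ)) *
                    ∑ j ∈ range (n' + 1), ((-1 : ℂ) ^ j * (n'.choose j : ℂ) * (j : ℂ) ^ i) := by
              rw [Finset.mul_sum]
              exact Finset.sum_congr rfl fun j _ => by ring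
            rw [hfac, this, mul_zero]
/-- `n^n ≤ e^n · n!`. -/
lemma pow_self_le_exp_pow_mul_factorial : ∀ n : ℕ, (n : ℝ) ^ n ≤ Real.exp 1 ^ n * (n.factorial : ℝ)
  | 0 => by simp
  | n + 1 => by
    have ih := pow_self_le_exp_pow_mul_factorial n
    have key : ((n : ℝ) + 1) ^ n ≤ Real.exp 1 * (n : ℝ) ^ n := by
      rcases Nat.eq_zero_or_pos n with rfl | hn
      · simpa using Real.one_le_exp zero_le_one
      · have hnR : (0 : ℝ) < n := by exact_mod_cast hn
        have h1 : (n : ℝ) + 1 = (n : ℝ) * (1 + 1 / n) := by field_simp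
        have h2 : (1 : ℝ) + 1 / n ≤ Real.exp (1 / n) := by
          have := Real.add_one_le_exp (1 / (n : ℝ))
          linarith
        have h3 : ((1 : ℝ) + 1 / n) ^ n ≤ Real.exp (1 / n) ^ n := by
          apply pow_le_pow_left₀ (by positivity) h2
        have h4 : Real.exp (1 / (n : ℝ)) ^ n = Real.exp 1 := by
          rw [← Real.exp_nat_mul]
          congr 1
          field_simp
        calc ((n : ℝ) + 1) ^ n = (n : ℝ) ^ n * ((1 : ℝ) + 1 / n) ^ n := by
              rw [h1, mul_pow]
          _ ≤ (n : ℝ) ^ n * Real.exp 1 := by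
              apply mul_le_mul_of_nonneg_left _ (by positivity)
              rw [← h4]; exact h3
          _ = Real.exp 1 * (n : ℝ) ^ n := by ring
    have hexp : (0 : ℝ) < Real.exp 1 := Real.exp_pos 1
    calc ((n + 1 : ℕ) : ℝ) ^ (n + 1) = ((n : ℝ) + 1) ^ n * ((n : ℝ) + 1) := by
          push_cast; ring
      _ ≤ (Real.exp 1 * (n : ℝ) ^ n) * ((n : ℝ) + 1) := by
          apply mul_le_mul_of_nonneg_right key (by positivity)
      _ ≤ (Real.exp 1 * (Real.exp 1 ^ n * n.factorial)) * ((n : ℝ) + 1) := by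
          apply mul_le_mul_of_nonneg_right _ (by positivity)
          exact mul_le_mul_of_nonneg_left ih hexp.le
      _ = Real.exp 1 ^ (n + 1) * ((n + 1).factorial : ℝ) := by
          rw [Nat.factorial_succ]; push_cast; ring

/-- `(n+1)^n / (n+1)! ≤ e^(n+1)`. -/
lemma coeff_bound (m : ℕ) :
    ((m + 1 : ℕ) : ℝ) ^ m / ((m + 1).factorial : ℝ) ≤ Real.exp 1 ^ (m + 1) := by
  rw [div_le_iff₀ (by positivity)]
  have h1 : ((m + 1 : ℕ) : ℝ) ^ m ≤ ((m + 1 : ℕ) : ℝ) ^ (m + 1) := by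
    apply pow_le_pow_right₀ (by exact_mod_cast Nat.le_add_left 1 m)
    omega
  calc ((m + 1 : ℕ) : ℝ) ^ m ≤ ((m + 1 : ℕ) : ℝ) ^ (m + 1) := h1
    _ ≤ Real.exp 1 ^ (m + 1) * ((m + 1).factorial : ℝ) := pow_self_le_exp_pow_mul_factorial (m + 1)

lemma exp_five_fourths_lt_four : Real.exp (5 / 4) < 4 := by
  have h9 := Real.exp_one_lt_d9
  have h5 : Real.exp 1 ^ 5 < 256 := by
    have := pow_lt_pow_left₀ h9 (Real.exp_pos 1).le (n := 5)
    calc Real.exp 1 ^ 5 < 2.7182818286 ^ 5 := by simpa using this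
      _ < 256 := by norm_num
  have h4 : Real.exp (5 / 4) ^ 4 = Real.exp 1 ^ 5 := by
    rw [← Real.exp_nat_mul, ← Real.exp_nat_mul]
    norm_num
  have : Real.exp (5 / 4) ^ 4 < 4 ^ 4 := by
    rw [h4]; exact lt_of_lt_of_le h5 (by norm_num)
  exact lt_of_pow_lt_pow_left₀ 4 (by norm_num) this

/-- The principal branch of the Lambert W function, defined by its power series
`W(z) = -∑_{n ≥ 1} (n^{n-1}/n!) (-z)^n` (here indexed by `n = m+1`, `m : ℕ`). -/
noncomputable def lambertW (z : ℂ) : ℂ :=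
  -∑' m : ℕ, (((m + 1 : ℕ) : ℂ) ^ m / (Nat.factorial (m + 1) : ℂ)) * (-z) ^ (m + 1)

lemma lambertW_comp (t : ℂ) (ht : ‖t‖ ≤ 1 / 4) :
    lambertW (t * Complex.exp t) = t := by
  classical
  set G : ℕ × ℕ → ℂ := fun p =>
    (-1) ^ p.1 * ((p.1 + 1 : ℕ) : ℂ) ^ (p.1 + p.2) / ((p.1 + 1).factorial : ℂ)
      / (p.2.factorial : ℂ) * t ^ (p.1 + 1 + p.2) with hGdef
  -- rows (complex)
  have hrow : ∀ m : ℕ, HasSum (fun j => G (m, j))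
      (-((((m + 1 : ℕ) : ℂ)) ^ m / ((m + 1).factorial : ℂ) * (-(t * Complex.exp t)) ^ (m + 1))) := by
    intro m
    have he := NormedSpace.expSeries_div_hasSum_exp (((m + 1 : ℕ) : ℂ) * t)
    rw [← Complex.exp_eq_exp_ℂ] at he
    have hC := he.mul_left
      ((-1 : ℂ) ^ m * ((m + 1 : ℕ) : ℂ) ^ m / ((m + 1).factorial : ℂ) * t ^ (m + 1))
    have hfun : (fun j => ((-1 : ℂ) ^ m * ((m + 1 : ℕ) : ℂ) ^ m / ((m + 1).factorial : ℂ) * t ^ (m + 1))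
          * ((((m + 1 : ℕ) : ℂ) * t) ^ j / (j.factorial : ℂ))) = fun j => G (m, j) := by
      funext j
      simp only [hGdef, pow_add, mul_pow]
      ring
    rw [hfun] at hC
    convert hC using 1
    · rfl
    have hexp : Complex.exp (((m + 1 : ℕ) : ℂ) * t) = Complex.exp t ^ (m + 1) :=
      Complex.exp_nat_mul t (m + 1)
    rw [hexp, neg_pow, mul_pow]
    ring
  -- norms of entries
  have hnorm : ∀ p : ℕ × ℕ, ‖G p‖
      = ((p.1 + 1 : ℕ) : ℝ) ^ (p.1 + p.2) / ((p.1 + 1).factorial : ℝ) / (p.2.factorial : ℝ)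
        * ‖t‖ ^ (p.1 + 1 + p.2) := by
    intro p
    simp only [hGdef, norm_mul, norm_div, norm_pow, Complex.norm_natCast, norm_neg, norm_one,
      one_pow, one_mul]
  -- rows (norms)
  have hrownorm : ∀ m : ℕ, HasSum (fun j => ‖G (m, j)‖)
      (((m + 1 : ℕ) : ℝ) ^ m / ((m + 1).factorial : ℝ) * ‖t‖ ^ (m + 1)
        * Real.exp (((m + 1 : ℕ) : ℝ) * ‖t‖)) := by
    intro m
    have he := NormedSpace.expSeries_div_hasSum_exp (((m + 1 : ℕ) : ℝ) * ‖t‖)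
    rw [← Real.exp_eq_exp_ℝ] at he
    have hC := he.mul_left (((m + 1 : ℕ) : ℝ) ^ m / ((m + 1).factorial : ℝ) * ‖t‖ ^ (m + 1))
    have hfun : (fun j => (((m + 1 : ℕ) : ℝ) ^ m / ((m + 1).factorial : ℝ) * ‖t‖ ^ (m + 1))
          * ((((m + 1 : ℕ) : ℝ) * ‖t‖) ^ j / (j.factorial : ℝ))) = fun j => ‖G (m, j)‖ := by
      funext j
      rw [hnorm (m, j)]
      simp only [pow_add, mul_pow]
      ring
    rw [hfun] at hC
    exact hC
  set q : ℝ := Real.exp 1 * (‖t‖ * Real.exp ‖t‖) with hqdef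
  have hq0 : 0 ≤ q := by positivity
  have hq1 : q < 1 := by
    have h1 : q ≤ Real.exp 1 * ((1 / 4) * Real.exp (1 / 4)) := by
      apply mul_le_mul_of_nonneg_left _ (Real.exp_pos 1).le
      apply mul_le_mul ht (Real.exp_le_exp.mpr ht) (Real.exp_pos _).le (by norm_num)
    have h2 : Real.exp 1 * ((1 / 4) * Real.exp (1 / 4)) = Real.exp (5 / 4) / 4 := by
      rw [show (5 / 4 : ℝ) = 1 + 1 / 4 by norm_num, Real.exp_add]
      ring
    have h3 : Real.exp (5 / 4) / 4 < 1 := by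
      have := exp_five_fourths_lt_four
      linarith
    linarith
  have hrowbound : ∀ m : ℕ,
      ((m + 1 : ℕ) : ℝ) ^ m / ((m + 1).factorial : ℝ) * ‖t‖ ^ (m + 1)
        * Real.exp (((m + 1 : ℕ) : ℝ) * ‖t‖) ≤ q ^ (m + 1) := by
    intro m
    have hexp : Real.exp (((m + 1 : ℕ) : ℝ) * ‖t‖) = Real.exp ‖t‖ ^ (m + 1) :=
      Real.exp_nat_mul ‖t‖ (m + 1)
    have hbd := coeff_bound m
    calc ((m + 1 : ℕ) : ℝ) ^ m / ((m + 1).factorial : ℝ) * ‖t‖ ^ (m + 1)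
          * Real.exp (((m + 1 : ℕ) : ℝ) * ‖t‖)
        = ((m + 1 : ℕ) : ℝ) ^ m / ((m + 1).factorial : ℝ)
            * (‖t‖ ^ (m + 1) * Real.exp ‖t‖ ^ (m + 1)) := by rw [hexp]; ring
      _ ≤ Real.exp 1 ^ (m + 1) * (‖t‖ ^ (m + 1) * Real.exp ‖t‖ ^ (m + 1)) := by
          apply mul_le_mul_of_nonneg_right hbd (by positivity)
      _ = q ^ (m + 1) := by rw [hqdef, mul_pow, mul_pow]
  -- summability
  have hGnormsum : Summable (fun p : ℕ × ℕ => ‖G p‖) := by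
    rw [summable_prod_of_nonneg (fun p => norm_nonneg _)]
    refine ⟨fun m => (hrownorm m).summable, ?_⟩
    have hgeo : Summable (fun m : ℕ => q ^ (m + 1)) := by
      have h := (summable_geometric_of_lt_one hq0 hq1).mul_left q
      exact h.congr fun m => by rw [pow_succ]; ring
    exact Summable.of_nonneg_of_le (fun m => tsum_nonneg fun j => norm_nonneg _)
      (fun m => by rw [(hrownorm m).tsum_eq]; exact hrowbound m) hgeo
  have hGsum : Summable G := hGnormsum.of_norm
  -- inner diagonal sums
  have hdiag : ∀ s : ℕ, (∑ p ∈ Finset.HasAntidiagonal.antidiagonal s, G p) = if s = 0 then t else 0 := by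
    intro s
    match s with
    | 0 =>
      rw [if_pos rfl]
      rw [Finset.Nat.antidiagonal_zero, Finset.sum_singleton]
      simp [hGdef]
    | (s + 1) =>
      rw [if_neg (Nat.succ_ne_zero s)]
      set S := s + 1 with hSdef
      rw [Finset.Nat.sum_antidiagonal_eq_sum_range_succ_mk]
      have hterm : ∀ m ∈ Finset.range (S + 1), G (m, S - m)
          = ((-1 : ℂ) ^ m * ((S + 1).choose (m + 1) : ℂ) * ((m + 1 : ℕ) : ℂ) ^ S
              / ((S + 1).factorial : ℂ)) * t ^ (S + 1) := by
        intro m hm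
        have hmS : m ≤ S := Nat.lt_succ_iff.mp (Finset.mem_range.mp hm)
        have h1 : m + (S - m) = S := Nat.add_sub_cancel' hmS
        have h2 : m + 1 + (S - m) = S + 1 := by omega
        have hcast : (((S + 1).choose (m + 1) : ℕ) : ℂ)
            = ((S + 1).factorial : ℂ) / (((m + 1).factorial : ℂ) * ((S - m).factorial : ℂ)) := by
          rw [Nat.cast_choose ℂ (by omega : m + 1 ≤ S + 1)]
          have hss : S + 1 - (m + 1) = S - m := by omega
          rw [hss]
        have hf1 : ((m + 1).factorial : ℂ) ≠ 0 := Nat.cast_ne_zero.mpr (Nat.factorial_ne_zero _)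
        have hf2 : ((S - m).factorial : ℂ) ≠ 0 := Nat.cast_ne_zero.mpr (Nat.factorial_ne_zero _)
        have hf3 : ((S + 1).factorial : ℂ) ≠ 0 := Nat.cast_ne_zero.mpr (Nat.factorial_ne_zero _)
        simp only [hGdef, h1, h2]
        rw [hcast]
        field_simp
      rw [Finset.sum_congr rfl hterm, ← Finset.sum_mul]
      have hcoef : ∑ m ∈ Finset.range (S + 1),
          (-1 : ℂ) ^ m * ((S + 1).choose (m + 1) : ℂ) * ((m + 1 : ℕ) : ℂ) ^ S
            / ((S + 1).factorial : ℂ) = 0 := by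
        rw [← Finset.sum_div]
        have hz := alt_sum_choose_pow_eq_zero S (S + 1) (Nat.lt_succ_self S)
        rw [Finset.sum_range_succ'] at hz
        have h0 : (-1 : ℂ) ^ 0 * (((S + 1).choose 0 : ℕ) : ℂ) * ((0 : ℕ) : ℂ) ^ S = 0 := by
          simp [hSdef]
        rw [h0, add_zero] at hz
        have hneg : ∑ m ∈ Finset.range (S + 1),
            (-1 : ℂ) ^ (m + 1) * (((S + 1).choose (m + 1) : ℕ) : ℂ) * (((m + 1 : ℕ)) : ℂ) ^ S
          = -∑ m ∈ Finset.range (S + 1),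
            (-1 : ℂ) ^ m * ((S + 1).choose (m + 1) : ℂ) * ((m + 1 : ℕ) : ℂ) ^ S := by
          rw [← Finset.sum_neg_distrib]
          exact Finset.sum_congr rfl fun m _ => by ring
        rw [hneg, neg_eq_zero] at hz
        rw [hz, zero_div]
      rw [hcoef, zero_mul]
  -- main chain
  calc lambertW (t * Complex.exp t)
      = -∑' m : ℕ, (((m + 1 : ℕ) : ℂ) ^ m / ((m + 1).factorial : ℂ)
          * (-(t * Complex.exp t)) ^ (m + 1)) := rfl
    _ = ∑' m : ℕ, -(((m + 1 : ℕ) : ℂ) ^ m / ((m + 1).factorial : ℂ)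
          * (-(t * Complex.exp t)) ^ (m + 1)) := by rw [tsum_neg]
    _ = ∑' m : ℕ, ∑' j : ℕ, G (m, j) := tsum_congr fun m => ((hrow m).tsum_eq).symm
    _ = ∑' p : ℕ × ℕ, G p := (Summable.tsum_prod' hGsum fun m => (hrow m).summable).symm
    _ = ∑' x : (Σ n : ℕ, Finset.HasAntidiagonal.antidiagonal n), G (Finset.HasAntidiagonal.sigmaAntidiagonalEquivProd x) :=
        (Finset.HasAntidiagonal.sigmaAntidiagonalEquivProd.tsum_eq G).symm
    _ = ∑' s : ℕ, ∑' p : Finset.HasAntidiagonal.antidiagonal s, G ↑p := by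
        have h₂ : Summable (fun x : (Σ n : ℕ, Finset.HasAntidiagonal.antidiagonal n) =>
            G (Finset.HasAntidiagonal.sigmaAntidiagonalEquivProd x)) :=
          Finset.HasAntidiagonal.sigmaAntidiagonalEquivProd.summable_iff.mpr hGsum
        exact h₂.tsum_sigma' (fun s => Summable.of_finite)
    _ = ∑' s : ℕ, (if s = 0 then t else 0) := by
        refine tsum_congr fun s => ?_
        rw [← hdiag s]
        exact Finset.tsum_subtype (Finset.HasAntidiagonal.antidiagonal s) G
    _ = t := tsum_ite_eq 0 (fun _ => t)

noncomputable def wcoef : ℕ → ℂ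
  | 0 => 0
  | (m + 1) => (-1) ^ m * ((m + 1 : ℕ) : ℂ) ^ m / ((m + 1).factorial : ℂ)

lemma wcoef_norm_le (n : ℕ) : ‖wcoef n‖ ≤ Real.exp 1 ^ n := by
  match n with
  | 0 => simp [wcoef]
  | (m + 1) =>
    have h : ‖wcoef (m + 1)‖ = ((m + 1 : ℕ) : ℝ) ^ m / ((m + 1).factorial : ℝ) := by
      simp only [wcoef, norm_div, norm_mul, norm_pow, Complex.norm_natCast, norm_neg, norm_one,
        one_pow, one_mul]
    rw [h]
    exact coeff_bound m

noncomputable def wseries : FormalMultilinearSeries ℂ ℂ ℂ :=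
  FormalMultilinearSeries.ofScalars ℂ wcoef

lemma wseries_radius : ENNReal.ofReal (1 / Real.exp 1) ≤ wseries.radius := by
  apply ENNReal.le_of_forall_nnreal_lt
  intro r hr
  have hrR : (r : ℝ) < 1 / Real.exp 1 := by
    rwa [← ENNReal.ofReal_coe_nnreal, ENNReal.ofReal_lt_ofReal_iff (by positivity)] at hr
  have her : Real.exp 1 * (r : ℝ) ≤ 1 := by
    rw [lt_div_iff₀ (Real.exp_pos 1)] at hrR
    nlinarith
  apply FormalMultilinearSeries.le_radius_of_bound _ 1
  intro n
  calc ‖wseries n‖ * (r : ℝ) ^ n = ‖wcoef n‖ * (r : ℝ) ^ n := by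
        rw [wseries, FormalMultilinearSeries.ofScalars_norm]
    _ ≤ Real.exp 1 ^ n * (r : ℝ) ^ n :=
        mul_le_mul_of_nonneg_right (wcoef_norm_le n) (by positivity)
    _ = (Real.exp 1 * (r : ℝ)) ^ n := (mul_pow _ _ _).symm
    _ ≤ 1 := pow_le_one₀ (by positivity) her

lemma lambertW_analytic :
    AnalyticOnNhd ℂ lambertW (Metric.ball (0 : ℂ) (1 / Real.exp 1)) := by
  have hpos : (0 : ENNReal) < ENNReal.ofReal (1 / Real.exp 1) :=
    ENNReal.ofReal_pos.mpr (by positivity)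
  have hball : HasFPowerSeriesOnBall wseries.sum wseries 0 (ENNReal.ofReal (1 / Real.exp 1)) :=
    (wseries.hasFPowerSeriesOnBall (lt_of_lt_of_le hpos wseries_radius)).mono hpos wseries_radius
  have heq : Set.EqOn wseries.sum lambertW
      (Metric.eball (0 : ℂ) (ENNReal.ofReal (1 / Real.exp 1))) := by
    intro z hz
    have hsum := hball.hasSum (by simpa using hz)
    have hsum' : HasSum (fun n => wcoef n * z ^ n) (wseries.sum (0 + z)) := by
      refine hsum.congr_fun fun n => ?_
      rw [wseries, FormalMultilinearSeries.ofScalars_apply_eq, smul_eq_mul]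
    have hsummable := hsum'.summable
    have h1 : wseries.sum z = ∑' n, wcoef n * z ^ n := by
      rw [hsum'.tsum_eq, zero_add]
    rw [h1]
    calc ∑' n, wcoef n * z ^ n
        = wcoef 0 * z ^ 0 + ∑' m, wcoef (m + 1) * z ^ (m + 1) := Summable.tsum_eq_zero_add hsummable
      _ = ∑' m, wcoef (m + 1) * z ^ (m + 1) := by simp [wcoef]
      _ = ∑' m, -((((m + 1 : ℕ) : ℂ)) ^ m / ((m + 1).factorial : ℂ) * (-z) ^ (m + 1)) := by
          refine tsum_congr fun m => ?_
          rw [show wcoef (m + 1) = (-1) ^ m * ((m + 1 : ℕ) : ℂ) ^ m / ((m + 1).factorial : ℂ)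
            from rfl, neg_pow]
          ring
      _ = lambertW z := by rw [tsum_neg]; rfl
  have h2 : HasFPowerSeriesOnBall lambertW wseries 0 (ENNReal.ofReal (1 / Real.exp 1)) :=
    hball.congr heq
  have := h2.analyticOnNhd
  rwa [Metric.emetric_ball] at this

/-- `W(z) e^{W(z)} = z` for all `z` with `|z| < 1/e`. -/
theorem lambertW_mul_exp_lambertW (z : ℂ) (hz : ‖z‖ < 1 / Real.exp 1) :
    lambertW z * Complex.exp (lambertW z) = z := by
  set U := Metric.ball (0 : ℂ) (1 / Real.exp 1) with hU
  set F : ℂ → ℂ := fun w => lambertW w * Complex.exp (lambertW w) - w with hF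
  have hWa : AnalyticOnNhd ℂ lambertW U := lambertW_analytic
  have hFa : AnalyticOnNhd ℂ F U := fun w hw =>
    ((hWa w hw).mul ((hWa w hw).cexp)).sub analyticAt_id
  have hpre : IsPreconnected U := (convex_ball _ _).isPreconnected
  have h0 : (0 : ℂ) ∈ U := Metric.mem_ball_self (by positivity)
  -- the test sequence
  set u : ℕ → ℂ := fun k => ((1 / ((k : ℝ) + 4) : ℝ) : ℂ)
      * Complex.exp ((1 / ((k : ℝ) + 4) : ℝ) : ℂ) with hu
  have huk : ∀ k : ℕ, F (u k) = 0 := by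
    intro k
    have hb : (0 : ℝ) < (k : ℝ) + 4 := by positivity
    have hnorm : ‖(((1 / ((k : ℝ) + 4) : ℝ)) : ℂ)‖ ≤ 1 / 4 := by
      rw [Complex.norm_real, Real.norm_eq_abs, abs_of_pos (by positivity)]
      rw [div_le_div_iff₀ hb (by norm_num)]
      linarith [Nat.cast_nonneg (α := ℝ) k]
    have := lambertW_comp _ hnorm
    simp only [hF, hu]
    rw [this]
    ring
  have hune : ∀ k : ℕ, u k ≠ 0 := by
    intro k
    apply mul_ne_zero
    · simp only [ne_eq, Complex.ofReal_eq_zero]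
      positivity
    · exact Complex.exp_ne_zero _
  have htu : Filter.Tendsto u Filter.atTop (nhds 0) := by
    have h1 : Filter.Tendsto (fun k : ℕ => (k : ℝ) + 4) Filter.atTop Filter.atTop :=
      Filter.tendsto_atTop_add_const_right _ 4 tendsto_natCast_atTop_atTop
    have h2 : Filter.Tendsto (fun k : ℕ => 1 / ((k : ℝ) + 4)) Filter.atTop (nhds 0) := by
      simpa [one_div, Pi.inv_def] using h1.inv_tendsto_atTop
    have hcont : Continuous fun r : ℝ => ((r : ℂ) * Complex.exp (r : ℂ)) := by
      continuity
    have := (hcont.tendsto 0).comp h2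
    simpa [hu, Function.comp_def, one_div] using this
  have htu' : Filter.Tendsto u Filter.atTop (nhdsWithin 0 {(0 : ℂ)}ᶜ) :=
    tendsto_nhdsWithin_of_tendsto_nhds_of_eventually_within u htu
      (Filter.Eventually.of_forall fun k => hune k)
  have hfreq : ∃ᶠ w in nhdsWithin 0 {(0 : ℂ)}ᶜ, F w = 0 :=
    htu'.frequently (Filter.Frequently.of_forall huk)
  have hEq := hFa.eqOn_zero_of_preconnected_of_frequently_eq_zero hpre h0 hfreq
  have hzU : z ∈ U := mem_ball_zero_iff.mpr hz
  have := hEq hzU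
  simp only [hF, Pi.zero_apply] at this
  linear_combination this
end

section
/- The formal power series y(x) defined by the functional equation x = y(x)·e^{-y(x)^r} with y(0)=0, y'(0)=1, has coefficients y(x) = ∑_{n≥0} ((rn+1)^{n-1}/n!) x^{rn+1}. -/
section AbelAux
open Polynomial Finset

noncomputable def Ap (r : ℕ) : ℕ → Polynomial ℚ
  | 0 => 1
  | (m+1) => X * (X + C (((m:ℚ)+1)*r))^m

lemma Ap_deriv (r : ℕ) (m : ℕ) :
    (Ap r (m+1)).derivative = C ((m:ℚ)+1) * (Ap r m).comp (X + C (r:ℚ)) := by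
  cases m with
  | zero => simp [Ap]
  | succ k =>
    simp only [Ap]
    rw [derivative_mul, derivative_X, derivative_pow, derivative_add, derivative_X,
      derivative_C, pow_succ]
    apply Polynomial.funext
    intro x
    simp only [eval_add, eval_mul, eval_pow, eval_X, eval_C, eval_one, eval_comp,
      eval_natCast, add_zero, mul_one, one_mul]
    push_cast
    ring

lemma poly_eq_of_deriv (p q : Polynomial ℚ) (h1 : p.derivative = q.derivative)
    (h2 : p.eval 0 = q.eval 0) : p = q := by
  have h3 : (p - q).derivative = 0 := by rw [derivative_sub, h1, sub_self]
  have h4 := Polynomial.eq_C_of_derivative_eq_zero h3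
  have h5 : p - q = 0 := by
    rw [h4, coeff_zero_eq_eval_zero, eval_sub, h2, sub_self, map_zero]
  exact sub_eq_zero.mp h5

lemma Ap_eval_zero (r : ℕ) (m : ℕ) : (Ap r m).eval 0 = if m = 0 then 1 else 0 := by
  cases m <;> simp [Ap]

lemma Cmul (a b c d : ℚ) (P Q : Polynomial ℚ) (h : a * b = c * d) (hPQ : P = Q) :
    C a * (C b * P) = C c * (C d * Q) := by
  rw [← mul_assoc, ← C_mul, h, C_mul, mul_assoc, hPQ]

lemma Ap_binomial (r : ℕ) (n : ℕ) (y : ℚ) :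
    (Ap r n).comp (X + C y) =
      ∑ k ∈ range (n+1), C ((n.choose k : ℚ) * (Ap r (n-k)).eval y) * Ap r k := by
  induction n generalizing y with
  | zero => simp [Ap]
  | succ n ih =>
    apply poly_eq_of_deriv
    · rw [derivative_comp, Ap_deriv, derivative_sum]
      have e1 : ∀ k ∈ range (n+2),
          (C (((n+1).choose k : ℚ) * (Ap r (n+1-k)).eval y) * Ap r k).derivative
          = C (((n+1).choose k : ℚ) * (Ap r (n+1-k)).eval y) * (Ap r k).derivative := by
        intro k _
        rw [derivative_mul, derivative_C, zero_mul, zero_add]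
      rw [Finset.sum_congr rfl e1, Finset.sum_range_succ']
      have e2 : C (((n+1).choose 0 : ℚ) * (Ap r (n+1-0)).eval y) * (Ap r 0).derivative = 0 := by
        simp [Ap]
      rw [e2, add_zero]
      have e3 : ∀ k ∈ range (n+1),
          C (((n+1).choose (k+1) : ℚ) * (Ap r (n+1-(k+1))).eval y) * (Ap r (k+1)).derivative
          = C ((n:ℚ)+1) * (C ((n.choose k : ℚ) * (Ap r (n-k)).eval y)
              * (Ap r k).comp (X + C (r:ℚ))) := by
        intro k hk
        rw [Ap_deriv]
        have h := Nat.add_one_mul_choose_eq n k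
        have hc : ((n+1 : ℕ) : ℚ) * (n.choose k) = (((n+1).choose (k+1) : ℕ) : ℚ) * ((k+1 : ℕ) : ℚ) := by
          exact_mod_cast congrArg (Nat.cast : ℕ → ℚ) h
        push_cast at hc
        have hnk : n + 1 - (k + 1) = n - k := by omega
        rw [hnk]
        apply Polynomial.funext
        intro x
        simp only [eval_mul, eval_C]
        linear_combination (-(eval x ((Ap r k).comp (X + C (r:ℚ))) * (Ap r (n-k)).eval y)) * hc
      rw [Finset.sum_congr rfl e3, ← Finset.mul_sum]
      have e4 : ∑ k ∈ range (n+1), C ((n.choose k : ℚ) * (Ap r (n-k)).eval y)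
            * (Ap r k).comp (X + C (r:ℚ))
          = ((Ap r n).comp (X + C y)).comp (X + C (r:ℚ)) := by
        rw [ih, Polynomial.sum_comp]
        apply Finset.sum_congr rfl
        intro k _
        rw [mul_comp, C_comp]
      rw [e4]
      simp only [derivative_add, derivative_X, derivative_C, add_zero, one_mul, mul_comp,
        C_comp, comp_assoc, add_comp, X_comp]
      congr 2
      ring
    · rw [eval_comp]
      simp only [eval_finset_sum, eval_mul, eval_C, eval_add, eval_X, zero_add]
      rw [Finset.sum_eq_single 0]
      · simp [Ap_eval_zero]
      · intro k _ hk
        rw [Ap_eval_zero, if_neg hk, mul_zero]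
      · intro h; simp at h

lemma abel_scalar (r n : ℕ) (x y : ℚ) :
    (Ap r n).eval (x + y) =
      ∑ k ∈ range (n+1), (n.choose k : ℚ) * (Ap r (n-k)).eval y * (Ap r k).eval x := by
  have h := congrArg (eval x) (Ap_binomial r n y)
  rw [eval_comp, eval_add, eval_X, eval_C, eval_finset_sum] at h
  simpa [mul_assoc] using h

noncomputable def fc (r s n : ℕ) : ℚ :=
  if s ≤ n ∧ r ∣ (n - s) then (Ap r ((n-s)/r)).eval (s:ℚ) / ((n-s)/r).factorial else 0

lemma fc_eq (r : ℕ) (hr : 0 < r) (s m : ℕ) :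
    fc r s (r*m+s) = (Ap r m).eval (s:ℚ) / m.factorial := by
  have h1 : r*m+s-s = r*m := by omega
  have h2 : (r*m)/r = m := Nat.mul_div_cancel_left m hr
  unfold fc
  rw [if_pos ⟨by omega, by rw [h1]; exact Dvd.intro m rfl⟩, h1, h2]

lemma fc_eq_zero (r s n : ℕ) (h : ¬ ∃ m, n = r*m+s) : fc r s n = 0 := by
  unfold fc
  rw [if_neg]
  rintro ⟨h1, q, hq⟩
  exact h ⟨q, by omega⟩

lemma fc_exists (r s n : ℕ) (h : fc r s n ≠ 0) : ∃ m, n = r*m+s := by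
  by_contra hc
  exact h (fc_eq_zero r s n hc)

open PowerSeries in
lemma coeff_Y_pow (r : ℕ) (hr : 0 < r) (s : ℕ) : ∀ n : ℕ,
    PowerSeries.coeff n ((PowerSeries.mk (fc r 1))^(s+1)) = fc r (s+1) n := by
  induction s with
  | zero => intro n; rw [pow_one, coeff_mk]
  | succ s ih =>
    intro n
    rw [pow_succ, PowerSeries.coeff_mul]
    have hterm : ∀ p : ℕ × ℕ, p ∈ antidiagonal n →
        PowerSeries.coeff p.1 ((PowerSeries.mk (fc r 1))^(s+1)) *
          PowerSeries.coeff p.2 (PowerSeries.mk (fc r 1))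
        = fc r (s+1) p.1 * fc r 1 p.2 := by
      intro p _; rw [ih, coeff_mk]
    rw [Finset.sum_congr rfl hterm]
    by_cases hex : ∃ m, n = r*m + (s+2)
    · obtain ⟨m, rfl⟩ := hex
      have hinj : Function.Injective (fun p : ℕ × ℕ => (r*p.1+(s+1), r*p.2+1)) := by
        intro a b hab
        simp only [Prod.mk.injEq] at hab
        have h1 : a.1 = b.1 := Nat.eq_of_mul_eq_mul_left hr (by omega)
        have h2 : a.2 = b.2 := Nat.eq_of_mul_eq_mul_left hr (by omega)
        exact Prod.ext h1 h2
      set φ : ℕ × ℕ ↪ ℕ × ℕ := ⟨fun p => (r*p.1+(s+1), r*p.2+1), hinj⟩ with hφ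
      have hsub : (antidiagonal m).map φ ⊆ antidiagonal (r*m+(s+2)) := by
        intro x hx
        rw [Finset.mem_map] at hx
        obtain ⟨⟨a,b⟩, hab, rfl⟩ := hx
        rw [Finset.HasAntidiagonal.mem_antidiagonal] at hab ⊢
        simp only [hφ, Function.Embedding.coeFn_mk]
        subst hab
        ring
      have hvan : ∀ x ∈ antidiagonal (r*m+(s+2)), x ∉ (antidiagonal m).map φ →
          fc r (s+1) x.1 * fc r 1 x.2 = 0 := by
        intro x hx hnx
        rw [Finset.HasAntidiagonal.mem_antidiagonal] at hx
        by_contra hne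
        have h1 : fc r (s+1) x.1 ≠ 0 := fun h => hne (by rw [h, zero_mul])
        have h2 : fc r 1 x.2 ≠ 0 := fun h => hne (by rw [h, mul_zero])
        obtain ⟨m1, hm1⟩ := fc_exists _ _ _ h1
        obtain ⟨m2, hm2⟩ := fc_exists _ _ _ h2
        have hm : m1 + m2 = m := by
          have hd : r*(m1+m2) = r*m1 + r*m2 := Nat.mul_add r m1 m2
          have : r*(m1+m2) = r*m := by omega
          exact Nat.eq_of_mul_eq_mul_left hr this
        apply hnx
        rw [Finset.mem_map]
        exact ⟨(m1, m2), by rw [Finset.HasAntidiagonal.mem_antidiagonal]; exact hm,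
          by simp only [hφ, Function.Embedding.coeFn_mk]; rw [← hm1, ← hm2]⟩
      rw [← Finset.sum_subset hsub hvan, Finset.sum_map]
      -- now sum over antidiagonal m
      have hfc2 : fc r (s+1+1) (r*m+(s+2)) = (Ap r m).eval ((s:ℚ)+2) / m.factorial := by
        have := fc_eq r hr (s+2) m
        rw [this]
        norm_num
      rw [hfc2]
      have habel : (Ap r m).eval ((s:ℚ)+2) =
          ∑ k ∈ range (m+1), (m.choose k : ℚ) * (Ap r (m-k)).eval 1 * (Ap r k).eval ((s:ℚ)+1) := by
        have := abel_scalar r m ((s:ℚ)+1) 1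
        rw [show (s:ℚ)+1+1 = (s:ℚ)+2 by ring] at this
        exact this
      rw [habel, Finset.sum_div]
      rw [Finset.Nat.sum_antidiagonal_eq_sum_range_succ_mk]
      apply Finset.sum_congr rfl
      intro k hk
      rw [Finset.mem_range] at hk
      have hk' : k ≤ m := by omega
      simp only [φ, Function.Embedding.coeFn_mk]
      rw [fc_eq r hr (s+1) k, fc_eq r hr 1 (m-k)]
      rw [Nat.cast_choose ℚ hk']
      have e1 : (((s:ℕ)+1 : ℕ) : ℚ) = (s:ℚ)+1 := by push_cast; ring
      rw [e1]
      have f1 : (k.factorial : ℚ) ≠ 0 := Nat.cast_ne_zero.mpr k.factorial_ne_zero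
      have f2 : ((m-k).factorial : ℚ) ≠ 0 := Nat.cast_ne_zero.mpr (m-k).factorial_ne_zero
      have f3 : (m.factorial : ℚ) ≠ 0 := Nat.cast_ne_zero.mpr m.factorial_ne_zero
      field_simp
      ring
    · rw [fc_eq_zero r (s+2) n hex]
      apply Finset.sum_eq_zero
      intro x hx
      rw [Finset.HasAntidiagonal.mem_antidiagonal] at hx
      by_contra hne
      have h1 : fc r (s+1) x.1 ≠ 0 := fun h => hne (by rw [h, zero_mul])
      have h2 : fc r 1 x.2 ≠ 0 := fun h => hne (by rw [h, mul_zero])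
      obtain ⟨m1, hm1⟩ := fc_exists _ _ _ h1
      obtain ⟨m2, hm2⟩ := fc_exists _ _ _ h2
      have hd : r*(m1+m2) = r*m1 + r*m2 := Nat.mul_add r m1 m2
      exact hex ⟨m1+m2, by omega⟩

lemma pow_congr (n : ℕ) (u v : PowerSeries ℚ) (hu : PowerSeries.constantCoeff u = 0)
    (hv : PowerSeries.constantCoeff v = 0)
    (h : ∀ j, j < n → PowerSeries.coeff j u = PowerSeries.coeff j v) :
    ∀ s, ∀ k ≤ n, PowerSeries.coeff k (u^(s+2)) = PowerSeries.coeff k (v^(s+2)) := by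
  intro s
  induction s with
  | zero =>
    intro k hk
    have hc : ∀ w : PowerSeries ℚ, PowerSeries.coeff k (w^(0+2)) =
        ∑ p ∈ antidiagonal k, PowerSeries.coeff p.1 w * PowerSeries.coeff p.2 w := by
      intro w
      rw [show (0+2:ℕ) = 2 from rfl, sq, PowerSeries.coeff_mul]
    rw [hc u, hc v]
    apply Finset.sum_congr rfl
    intro x hx
    rw [Finset.HasAntidiagonal.mem_antidiagonal] at hx
    rcases Nat.eq_zero_or_pos x.1 with h1 | h1
    · simp only [h1, PowerSeries.coeff_zero_eq_constantCoeff_apply, hu, hv, zero_mul]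
    rcases Nat.eq_zero_or_pos x.2 with h2 | h2
    · simp only [h2, PowerSeries.coeff_zero_eq_constantCoeff_apply, hu, hv, mul_zero]
    rw [h x.1 (by omega), h x.2 (by omega)]
  | succ s ih =>
    intro k hk
    have hc : ∀ w : PowerSeries ℚ, PowerSeries.coeff k (w^(s+1+2)) =
        ∑ p ∈ antidiagonal k,
          PowerSeries.coeff p.1 (w^(s+2)) * PowerSeries.coeff p.2 w := by
      intro w
      rw [show s+1+2 = (s+2)+1 from rfl, pow_succ, PowerSeries.coeff_mul]
    rw [hc u, hc v]
    apply Finset.sum_congr rfl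
    intro x hx
    rw [Finset.HasAntidiagonal.mem_antidiagonal] at hx
    rcases Nat.eq_zero_or_pos x.1 with h1 | h1
    · simp only [h1, PowerSeries.coeff_zero_eq_constantCoeff_apply, map_pow, hu, hv,
        zero_pow (show s+2 ≠ 0 by omega), zero_mul]
    rcases Nat.eq_zero_or_pos x.2 with h2 | h2
    · simp only [h2, PowerSeries.coeff_zero_eq_constantCoeff_apply, hu, hv, mul_zero]
    rw [ih x.1 (by omega), h x.2 (by omega)]

lemma fc_one_zero (r : ℕ) : fc r 1 0 = 0 := by
  unfold fc
  rw [if_neg]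
  rintro ⟨h, _⟩
  omega

lemma arith_key (r m' : ℕ) :
    ((r:ℚ)+1) * (r*(m'+1)) * ((Ap r (m'+1)).eval 1 / (m'+1).factorial)
      = r * (r*(m'+1)+1) * ((Ap r m').eval ((r:ℚ)+1) / m'.factorial) := by
  cases m' with
  | zero => simp [Ap]; ring
  | succ t =>
    simp only [Ap, eval_mul, eval_pow, eval_add, eval_X, eval_C, eval_one]
    rw [pow_succ]
    have hf : (((t+1)+1).factorial : ℚ) = ((t+1)+1) * ((t+1).factorial : ℚ) := by
      rw [Nat.factorial_succ]; push_cast; ring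
    rw [hf]
    have f1 : ((t+1).factorial : ℚ) ≠ 0 := Nat.cast_ne_zero.mpr (t+1).factorial_ne_zero
    field_simp
    push_cast
    ring

end AbelAux

open PowerSeries

/-- the unique formal power series solution `y(x)` of `x = y e^{-y^r}` with
`y(0) = 0`, `y'(0) = 1` has coefficients `y(x) = ∑_{n ≥ 0} ((rn+1)^{n-1}/n!) x^{rn+1}`.
The series `E = e^{-y^r}` is characterized by its value `E(0) = 1` and the ODE
`E' = (-y^r)'·E`. -/
theorem coefficients_r_spin_curve (r : ℕ) (hr : 0 < r) (y E : PowerSeries ℚ)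
    (hy0 : PowerSeries.constantCoeff y = 0)
    (hy1 : PowerSeries.coeff 1 y = 1)
    (hE0 : PowerSeries.constantCoeff E = 1)
    (hE : PowerSeries.derivativeFun E = -(PowerSeries.derivativeFun (y ^ r)) * E)
    (heq : (PowerSeries.X : PowerSeries ℚ) = y * E) :
    (∀ n : ℕ, PowerSeries.coeff (r * n + 1) y =
        ((r * n + 1 : ℕ) : ℚ) ^ ((n : ℤ) - 1) / (Nat.factorial n : ℚ)) ∧
      ∀ k : ℕ, (¬ ∃ n : ℕ, k = r * n + 1) → PowerSeries.coeff k y = 0 := by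
  obtain ⟨rp, rfl⟩ : ∃ rp, r = rp + 1 := ⟨r - 1, by omega⟩
  have hcd : ∀ (f : PowerSeries ℚ) (n : ℕ), PowerSeries.coeff n (PowerSeries.derivativeFun f)
      = PowerSeries.coeff (n + 1) f * (n + 1) := fun f n => PowerSeries.coeff_derivative f n
  have hdX : PowerSeries.derivativeFun (PowerSeries.X : PowerSeries ℚ) = 1 := by
    ext n
    rw [hcd]
    rcases n with _ | n <;> simp [PowerSeries.coeff_X, PowerSeries.coeff_one]
  have hpow : ∀ (k : ℕ), PowerSeries.derivativeFun (y^(k+1))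
      = (k+1) • (y^k * PowerSeries.derivativeFun y) := by
    intro k
    have h := (PowerSeries.derivative ℚ).leibniz_pow (a := y) (k+1)
    simp only [Nat.add_sub_cancel, smul_eq_mul] at h
    exact h
  have e1 : y = PowerSeries.derivativeFun y * PowerSeries.X
      - (y * PowerSeries.derivativeFun (y^(rp+1))) * PowerSeries.X := by
    have h1 : (1 : PowerSeries ℚ) = PowerSeries.derivativeFun y * E
        + y * PowerSeries.derivativeFun E := by
      have h := congrArg PowerSeries.derivativeFun heq
      rw [hdX, PowerSeries.derivativeFun_mul] at h
      rw [h]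
      simp only [smul_eq_mul]
      ring
    calc y = y * (PowerSeries.derivativeFun y * E
            + y * (-(PowerSeries.derivativeFun (y^(rp+1))) * E)) := by
          rw [← hE, ← h1, mul_one]
      _ = PowerSeries.derivativeFun y * (y*E)
            - (y * PowerSeries.derivativeFun (y^(rp+1))) * (y*E) := by ring
      _ = _ := by rw [← heq]
  have hrel : ∀ k : ℕ, ((rp:ℚ)+2) * ((k:ℚ)) * PowerSeries.coeff (k+1) y
      = ((rp:ℚ)+1) * ((k:ℚ)+1) * PowerSeries.coeff (k+1) (y^(rp+2)) := by
    intro k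
    set W := PowerSeries.coeff k (y^(rp+1) * PowerSeries.derivativeFun y) with hW
    have hyD : y * PowerSeries.derivativeFun (y^(rp+1))
        = (rp+1) • (y^(rp+1) * PowerSeries.derivativeFun y) := by
      rw [hpow rp, mul_smul_comm]
      congr 1
      rw [← mul_assoc, ← pow_succ']
    have hD2 : PowerSeries.derivativeFun (y^(rp+2)) =
        (rp+2) • (y^(rp+1) * PowerSeries.derivativeFun y) := hpow (rp+1)
    have h1 : PowerSeries.coeff (k+1) y
        = PowerSeries.coeff k (PowerSeries.derivativeFun y) - ((rp:ℚ)+1) * W := by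
      conv_lhs => rw [e1]
      rw [map_sub, PowerSeries.coeff_succ_mul_X, PowerSeries.coeff_succ_mul_X, hyD,
        map_nsmul, nsmul_eq_mul]
      push_cast
      ring
    have h2 : PowerSeries.coeff (k+1) (y^(rp+2)) * ((k:ℚ)+1) = ((rp:ℚ)+2) * W := by
      have h := congrArg (PowerSeries.coeff k) hD2
      rw [hcd, map_nsmul, nsmul_eq_mul] at h
      push_cast at h
      linarith
    have h3 : PowerSeries.coeff k (PowerSeries.derivativeFun y)
        = PowerSeries.coeff (k+1) y * ((k:ℚ)+1) := by
      rw [hcd]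
      try push_cast
      try ring
    linear_combination (-((rp:ℚ)+1))*h2 - ((rp:ℚ)+2)*h1 - ((rp:ℚ)+2)*h3
  have key : ∀ n, PowerSeries.coeff n y = fc (rp+1) 1 n := by
    intro n
    induction n using Nat.strong_induction_on with
    | _ n ih =>
      match n, ih with
      | 0, _ => rw [PowerSeries.coeff_zero_eq_constantCoeff_apply, hy0, fc_one_zero]
      | 1, _ =>
        have h := fc_eq (rp+1) (by omega) 1 0
        norm_num [Ap] at h
        rw [hy1, h]
      | (k+2), ih =>
        have hY0 : PowerSeries.constantCoeff (PowerSeries.mk (fc (rp+1) 1)) = 0 := by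
          rw [PowerSeries.constantCoeff_mk, fc_one_zero]
        have hcmp := pow_congr (k+2) y (PowerSeries.mk (fc (rp+1) 1)) hy0 hY0
          (fun j hj => by rw [ih j hj, PowerSeries.coeff_mk]) rp (k+2) le_rfl
        have hYp : PowerSeries.coeff (k+2) ((PowerSeries.mk (fc (rp+1) 1))^(rp+2))
            = fc (rp+1) (rp+2) (k+2) := coeff_Y_pow (rp+1) (by omega) (rp+1) (k+2)
        have hr2 := hrel (k+1)
        norm_num at hr2
        rw [show k+1+1 = k+2 from rfl] at hr2
        rw [hcmp, hYp] at hr2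
        by_cases hex : ∃ m, k+2 = (rp+1)*m+1
        · obtain ⟨m, hm⟩ := hex
          obtain ⟨m', rfl⟩ : ∃ m', m = m'+1 := by
            refine ⟨m-1, ?_⟩
            rcases m with _ | m
            · omega
            · rfl
          have hmul : (rp+1)*(m'+1) = (rp+1)*m' + (rp+1) := Nat.mul_succ (rp+1) m'
          have hk2 : k+2 = (rp+1)*m' + (rp+2) := by omega
          have hfc1 : fc (rp+1) 1 (k+2) = (Ap (rp+1) (m'+1)).eval 1 / (m'+1).factorial := by
            rw [hm, fc_eq (rp+1) (by omega) 1 (m'+1)]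
            norm_num
          have hfc2 : fc (rp+1) (rp+2) (k+2)
              = (Ap (rp+1) m').eval ((rp:ℚ)+2) / m'.factorial := by
            rw [hk2, fc_eq (rp+1) (by omega) (rp+2) m']
            norm_num
          rw [hfc2] at hr2
          rw [hfc1]
          have hk1q : ((k:ℚ)+1) = ((rp:ℚ)+1)*((m':ℚ)+1) := by
            have hn : k+1 = (rp+1)*(m'+1) := by omega
            exact_mod_cast congrArg (Nat.cast : ℕ → ℚ) hn
          have ha := arith_key (rp+1) m'
          push_cast at ha
          rw [show (rp:ℚ)+1+1 = (rp:ℚ)+2 from by ring] at ha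
          have hne : (((rp:ℚ)+2)*((k:ℚ)+1)) ≠ 0 := by positivity
          apply mul_left_cancel₀ hne
          linear_combination hr2 - ha
            - (((rp:ℚ)+2) * ((Ap (rp+1) (m'+1)).eval 1 / ((m'+1).factorial:ℚ))) * hk1q
            + (((rp:ℚ)+1) * ((Ap (rp+1) m').eval ((rp:ℚ)+2) / (m'.factorial:ℚ))) * hk1q
        · have h0 : fc (rp+1) (rp+2) (k+2) = 0 := by
            apply fc_eq_zero
            rintro ⟨m, hm⟩
            have hmul : (rp+1)*(m+1) = (rp+1)*m + (rp+1) := Nat.mul_succ (rp+1) m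
            exact hex ⟨m+1, by omega⟩
          have h1 : fc (rp+1) 1 (k+2) = 0 := fc_eq_zero _ _ _ hex
          rw [h0] at hr2
          rw [h1]
          have hc : ((rp:ℚ)+2) * ((k:ℚ)+1) ≠ 0 := by positivity
          apply mul_left_cancel₀ hc
          rw [mul_zero]
          linear_combination hr2
  constructor
  · intro n
    rw [key ((rp+1)*n+1), fc_eq (rp+1) (by omega) 1 n]
    cases n with
    | zero => simp [Ap]
    | succ t =>
      rw [show ((t+1:ℕ):ℤ)-1 = (t:ℤ) by push_cast; ring, zpow_natCast]
      simp only [Ap, Polynomial.eval_mul, Polynomial.eval_pow, Polynomial.eval_add,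
        Polynomial.eval_X, Polynomial.eval_C, Polynomial.eval_one, one_mul, Nat.cast_one]
      congr 2
      push_cast
      ring
  · intro k hk
    rw [key k]
    exact fc_eq_zero _ _ _ hk
end

section
/- Let Z(x) = ∑_{i≥0} (x^{iq}/(i! (λq)^i)) · exp(λ((iq - 1/2)^2 - 1/4)/2). Then the differential operator λ x d/dx - (x e^{λ(q-1)/2})^q ∘ e^{qλ x d/dx} annihilates Z, where e^{qλ x d/dx} acts on x^n by multiplication with e^{qλn}. -/
open Filter Real

/-- The principal specialization of the `q`-double Hurwitz partition function:
`Z(x) = ∑_{i ≥ 0} (x^{iq}/(i! (λq)^i)) exp(λ((iq - 1/2)^2 - 1/4)/2)`. -/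
noncomputable def Zq (q : ℕ) (l : ℝ) (x : ℝ) : ℝ :=
  ∑' i : ℕ, x ^ (i * q) / ((Nat.factorial i : ℝ) * (l * q) ^ i) *
    Real.exp (l * ((((i * q : ℕ) : ℝ) - 1 / 2) ^ 2 - 1 / 4) / 2)

/-- The `i`-th term of the series defining `Zq`. -/
noncomputable def zterm (q : ℕ) (l x : ℝ) (i : ℕ) : ℝ :=
  x ^ (i * q) / ((Nat.factorial i : ℝ) * (l * q) ^ i) *
    Real.exp (l * ((((i * q : ℕ) : ℝ) - 1 / 2) ^ 2 - 1 / 4) / 2)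

/-- The derivative (in `x`) of the `i`-th term. -/
noncomputable def dterm (q : ℕ) (l x : ℝ) (i : ℕ) : ℝ :=
  ((i * q : ℕ) : ℝ) * x ^ (i * q - 1) / ((Nat.factorial i : ℝ) * (l * q) ^ i) *
    Real.exp (l * ((((i * q : ℕ) : ℝ) - 1 / 2) ^ 2 - 1 / 4) / 2)

lemma zterm_hasDerivAt (q : ℕ) (l : ℝ) (i : ℕ) (y : ℝ) :
    HasDerivAt (fun z => zterm q l z i) (dterm q l y i) y :=
  ((hasDerivAt_pow (i * q) y).div_const ((Nat.factorial i : ℝ) * (l * q) ^ i)).mul_const _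

lemma exp_factor_le_one (q i : ℕ) {l : ℝ} (hl : l < 0) :
    Real.exp (l * ((((i * q : ℕ) : ℝ) - 1 / 2) ^ 2 - 1 / 4) / 2) ≤ 1 := by
  rw [Real.exp_le_one_iff]
  have h : (0:ℝ) ≤ ((((i * q : ℕ)) : ℝ) - 1 / 2) ^ 2 - 1 / 4 := by
    rcases Nat.eq_zero_or_pos (i * q) with h | h
    · rw [h]; norm_num
    · have : (1:ℝ) ≤ (((i * q : ℕ)) : ℝ) := by exact_mod_cast h
      nlinarith
  nlinarith

lemma zterm_abs_eq (q : ℕ) (l y : ℝ) (i : ℕ) :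
    |zterm q l y i| = |y| ^ (i * q) / ((Nat.factorial i : ℝ) * (|l| * q) ^ i) *
      Real.exp (l * ((((i * q : ℕ) : ℝ) - 1 / 2) ^ 2 - 1 / 4) / 2) := by
  simp [zterm, abs_mul, abs_div, abs_pow, Nat.abs_cast, abs_of_nonneg (Real.exp_pos _).le]

lemma dterm_abs_eq (q : ℕ) (l y : ℝ) (i : ℕ) :
    |dterm q l y i| = ((i * q : ℕ) : ℝ) * |y| ^ (i * q - 1) /
      ((Nat.factorial i : ℝ) * (|l| * q) ^ i) *
      Real.exp (l * ((((i * q : ℕ) : ℝ) - 1 / 2) ^ 2 - 1 / 4) / 2) := by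
  simp [dterm, abs_mul, abs_div, abs_pow, Nat.abs_cast, abs_of_nonneg (Real.exp_pos _).le]

lemma zterm_abs_le (q : ℕ) (hq : 0 < q) {l : ℝ} (hl : l < 0) {R y : ℝ} (hR : 1 ≤ R)
    (hy : |y| ≤ R) (i : ℕ) :
    |zterm q l y i| ≤ (R ^ q / (|l| * q)) ^ i / (Nat.factorial i : ℝ) := by
  have hl0 : 0 < |l| := abs_pos.2 hl.ne
  have hq0 : (0:ℝ) < q := by exact_mod_cast hq
  have hfac : (0:ℝ) < (Nat.factorial i : ℝ) := by exact_mod_cast (Nat.factorial_pos i)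
  rw [zterm_abs_eq]
  calc |y| ^ (i * q) / ((Nat.factorial i : ℝ) * (|l| * q) ^ i) *
        Real.exp (l * ((((i * q : ℕ) : ℝ) - 1 / 2) ^ 2 - 1 / 4) / 2)
      ≤ R ^ (i * q) / ((Nat.factorial i : ℝ) * (|l| * q) ^ i) * 1 := by
        have h1 : |y| ^ (i * q) ≤ R ^ (i * q) := pow_le_pow_left₀ (abs_nonneg y) hy _
        have h2 := exp_factor_le_one q i hl
        gcongr <;> first | assumption | positivity
    _ = (R ^ q / (|l| * q)) ^ i / (Nat.factorial i : ℝ) := by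
        rw [mul_one, div_pow, mul_comm i q, pow_mul]
        field_simp

lemma dterm_abs_le (q : ℕ) (hq : 0 < q) {l : ℝ} (hl : l < 0) {R y : ℝ} (hR : 1 ≤ R)
    (hy : |y| ≤ R) (i : ℕ) :
    |dterm q l y i| ≤ (q : ℝ) * ((2 * R ^ q / (|l| * q)) ^ i / (Nat.factorial i : ℝ)) := by
  have hl0 : 0 < |l| := abs_pos.2 hl.ne
  have hq0 : (0:ℝ) < q := by exact_mod_cast hq
  have hfac : (0:ℝ) < (Nat.factorial i : ℝ) := by exact_mod_cast (Nat.factorial_pos i)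
  have hR0 : (0:ℝ) < R := lt_of_lt_of_le one_pos hR
  have hy0 : 0 ≤ |y| := abs_nonneg y
  have h2i : ((i : ℝ)) ≤ 2 ^ i := by exact_mod_cast (Nat.lt_two_pow_self (n := i)).le
  rw [dterm_abs_eq]
  calc ((i * q : ℕ) : ℝ) * |y| ^ (i * q - 1) / ((Nat.factorial i : ℝ) * (|l| * q) ^ i) *
        Real.exp (l * ((((i * q : ℕ) : ℝ) - 1 / 2) ^ 2 - 1 / 4) / 2)
      ≤ ((i * q : ℕ) : ℝ) * R ^ (i * q - 1) / ((Nat.factorial i : ℝ) * (|l| * q) ^ i) * 1 := by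
        have h1 : |y| ^ (i * q - 1) ≤ R ^ (i * q - 1) := pow_le_pow_left₀ (abs_nonneg y) hy _
        have h2 := exp_factor_le_one q i hl
        gcongr <;> first | assumption | positivity
    _ ≤ ((i * q : ℕ) : ℝ) * R ^ (i * q) / ((Nat.factorial i : ℝ) * (|l| * q) ^ i) * 1 := by
        have h1 : R ^ (i * q - 1) ≤ R ^ (i * q) := pow_le_pow_right₀ hR (Nat.sub_le _ _)
        gcongr <;> first | assumption | positivity
    _ ≤ ((q : ℝ) * (2 ^ i * R ^ (i * q))) / ((Nat.factorial i : ℝ) * (|l| * q) ^ i) * 1 := by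
        have h1 : ((i * q : ℕ) : ℝ) * R ^ (i * q) ≤ (q : ℝ) * (2 ^ i * R ^ (i * q)) := by
          push_cast
          nlinarith [pow_pos hR0 (i * q), mul_le_mul_of_nonneg_right h2i (pow_pos hR0 (i * q)).le,
            hq0]
        gcongr ?_ / _ * _
    _ = (q : ℝ) * ((2 * R ^ q / (|l| * q)) ^ i / (Nat.factorial i : ℝ)) := by
        rw [mul_one, div_pow, mul_pow, mul_comm i q, pow_mul]
        field_simp
        ring

/-- The key recurrence between consecutive terms. -/
lemma zterm_succ (q : ℕ) (hq : 0 < q) {l : ℝ} (hl : l ≠ 0) (x : ℝ) (i : ℕ) :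
    zterm q l x (i + 1) =
      zterm q l x i *
        (x ^ q * Real.exp (l * ((q : ℝ) - 1) / 2) ^ q * Real.exp ((q : ℝ) * l) ^ (i * q) /
          (((i : ℝ) + 1) * (l * q))) := by
  have hq' : (q : ℝ) ≠ 0 := Nat.cast_ne_zero.2 hq.ne'
  have hfac : ((Nat.factorial i : ℝ)) ≠ 0 := Nat.cast_ne_zero.2 (Nat.factorial_ne_zero i)
  have hi1 : ((i : ℝ) + 1) ≠ 0 := by positivity
  unfold zterm
  rw [show (i + 1) * q = i * q + q from by ring, pow_add, Nat.factorial_succ, pow_succ,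
    ← Real.exp_nat_mul, ← Real.exp_nat_mul,
    show l * ((((i * q + q : ℕ) : ℝ) - 1 / 2) ^ 2 - 1 / 4) / 2
        = l * ((((i * q : ℕ) : ℝ) - 1 / 2) ^ 2 - 1 / 4) / 2 +
          ((q : ℝ) * (l * ((q : ℝ) - 1) / 2) + ((i * q : ℕ) : ℝ) * ((q : ℝ) * l)) from by
      push_cast; ring,
    Real.exp_add, Real.exp_add]
  push_cast
  field_simp

lemma key (q : ℕ) (hq : 0 < q) {l : ℝ} (hl : l ≠ 0) (x : ℝ) (i : ℕ) :
    l * x * dterm q l x (i + 1) =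
      (x * Real.exp (l * ((q : ℝ) - 1) / 2)) ^ q * zterm q l (Real.exp ((q : ℝ) * l) * x) i := by
  have hq' : (q : ℝ) ≠ 0 := Nat.cast_ne_zero.2 hq.ne'
  have hi1 : ((i : ℝ) + 1) ≠ 0 := by positivity
  have h1 : zterm q l (Real.exp ((q : ℝ) * l) * x) i
      = Real.exp ((q : ℝ) * l) ^ (i * q) * zterm q l x i := by
    unfold zterm; rw [mul_pow]; ring
  have h2 : l * x * dterm q l x (i + 1) = l * (((i + 1) * q : ℕ) : ℝ) * zterm q l x (i + 1) := by
    unfold dterm zterm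
    have hx : x * x ^ ((i + 1) * q - 1) = x ^ ((i + 1) * q) := by
      rw [← pow_succ', Nat.sub_add_cancel (Nat.one_le_iff_ne_zero.2
        (Nat.mul_ne_zero (Nat.succ_ne_zero i) hq.ne'))]
    rw [← hx]; ring
  rw [h2, zterm_succ q hq hl x i, h1, mul_pow]
  push_cast
  field_simp

lemma not_summable_zterm (q : ℕ) (hq : 0 < q) {l : ℝ} (hl : 0 < l) {y : ℝ} (hy : y ≠ 0) :
    ¬ Summable (fun i => zterm q l y i) := by
  intro h
  have hq' : (q : ℝ) ≠ 0 := Nat.cast_ne_zero.2 hq.ne'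
  have hq0 : (0:ℝ) < q := by exact_mod_cast hq
  have hlq : (0:ℝ) < l * q := by positivity
  set t : ℕ → ℝ := fun i => |zterm q l y i| with ht_def
  have htpos : ∀ i, 0 < t i := by
    intro i
    apply abs_pos.2
    apply mul_ne_zero
    · exact div_ne_zero (pow_ne_zero _ hy)
        (mul_ne_zero (Nat.cast_ne_zero.2 (Nat.factorial_ne_zero i)) (pow_ne_zero _ hlq.ne'))
    · exact (Real.exp_pos _).ne'
  set A : ℝ := |y| ^ q * Real.exp (l * ((q : ℝ) - 1) / 2) ^ q with hA_def
  have hA : 0 < A := by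
    have : 0 < |y| := abs_pos.2 hy
    positivity
  set c : ℝ := (q : ℝ) * l with hc_def
  have hc : 0 < c := by positivity
  have hrat : ∀ i : ℕ, t (i + 1)
      = t i * (A * Real.exp c ^ (i * q) / (((i : ℝ) + 1) * (l * q))) := by
    intro i
    have hi1 : (0:ℝ) < (i : ℝ) + 1 := by positivity
    show |zterm q l y (i + 1)| = _
    rw [zterm_succ q hq hl.ne' y i, abs_mul]
    congr 1
    rw [abs_div, abs_mul, abs_mul, abs_pow, abs_pow, abs_pow,
      abs_of_pos (Real.exp_pos _), abs_of_pos (Real.exp_pos _),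
      abs_of_pos (mul_pos hi1 hlq)]
  obtain ⟨N, hN1, hN⟩ : ∃ N : ℕ, 1 ≤ N ∧ ∀ i, N ≤ i →
      1 ≤ A * Real.exp c ^ (i * q) / (((i : ℝ) + 1) * (l * q)) := by
    refine ⟨⌈8 * (l * (q:ℝ)) / (A * c ^ 2)⌉₊ + 1, by omega, ?_⟩
    intro i hi
    have hiR : 8 * (l * (q:ℝ)) / (A * c ^ 2) ≤ (i : ℝ) := by
      calc 8 * (l * (q:ℝ)) / (A * c ^ 2)
          ≤ (⌈8 * (l * (q:ℝ)) / (A * c ^ 2)⌉₊ : ℝ) := Nat.le_ceil _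
        _ ≤ (i : ℝ) := by exact_mod_cast Nat.le_of_succ_le hi
    have hi1 : (1:ℝ) ≤ (i : ℝ) := by
      have : 1 ≤ i := by omega
      exact_mod_cast this
    have hi0 : (0:ℝ) ≤ (i : ℝ) := by positivity
    have hexp1 : Real.exp (c * (i:ℝ)) = Real.exp (c * (i:ℝ) / 2) ^ 2 := by
      rw [sq, ← Real.exp_add]; ring_nf
    have hexp2 : c * (i:ℝ) / 2 + 1 ≤ Real.exp (c * (i:ℝ) / 2) := Real.add_one_le_exp _
    have hge : c ^ 2 * (i:ℝ) ^ 2 / 4 ≤ Real.exp (c * (i:ℝ)) := by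
      rw [hexp1]
      nlinarith [mul_nonneg hc.le hi0]
    have hpow : Real.exp (c * (i:ℝ)) ≤ Real.exp c ^ (i * q) := by
      calc Real.exp (c * (i:ℝ)) = Real.exp c ^ i := by
            rw [← Real.exp_nat_mul]; ring_nf
        _ ≤ Real.exp c ^ (i * q) :=
            pow_le_pow_right₀ (Real.one_le_exp hc.le) (Nat.le_mul_of_pos_right i hq)
    have hABi : 8 * (l * (q:ℝ)) ≤ A * c ^ 2 * (i:ℝ) := by
      rw [div_le_iff₀ (by positivity)] at hiR
      linarith
    rw [le_div_iff₀ (by positivity)]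
    have hmain : ((i:ℝ) + 1) * (l * q) ≤ A * (c ^ 2 * (i:ℝ) ^ 2 / 4) := by
      nlinarith [mul_le_mul_of_nonneg_right hABi hi0]
    calc 1 * (((i:ℝ) + 1) * (l * q)) = ((i:ℝ) + 1) * (l * q) := one_mul _
      _ ≤ A * (c ^ 2 * (i:ℝ) ^ 2 / 4) := hmain
      _ ≤ A * Real.exp (c * (i:ℝ)) := mul_le_mul_of_nonneg_left hge hA.le
      _ ≤ A * Real.exp c ^ (i * q) := mul_le_mul_of_nonneg_left hpow hA.le
  have hmono : ∀ i, N ≤ i → t N ≤ t i := by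
    intro i hi
    induction i, hi using Nat.le_induction with
    | base => exact le_rfl
    | succ n hn ih =>
      calc t N ≤ t n := ih
        _ ≤ t (n + 1) := by
            rw [hrat n]
            exact le_mul_of_one_le_right (htpos n).le (hN n hn)
  have ht0 : Tendsto t atTop (nhds 0) := by
    have h0 := h.tendsto_atTop_zero
    have := h0.abs
    rwa [abs_zero] at this
  have hev : ∀ᶠ i in atTop, t i < t N := ht0.eventually_lt_const (htpos N)
  obtain ⟨i, hiN, hilt⟩ := ((eventually_ge_atTop N).and hev).exists
  exact absurd (hmono i hiN) (not_le.2 hilt)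

/-- the operator `λ x d/dx - (x e^{λ(q-1)/2})^q ∘ e^{qλ x d/dx}` annihilates `Z`,
where `e^{qλ x d/dx}` acts on functions by `f(x) ↦ f(e^{qλ} x)`. -/
theorem q_double_quantum_curve_annihilates (q : ℕ) (hq : 0 < q) (l : ℝ) (hl : l ≠ 0) (x : ℝ) :
    l * x * deriv (Zq q l) x -
      (x * Real.exp (l * ((q : ℝ) - 1) / 2)) ^ q * Zq q l (Real.exp ((q : ℝ) * l) * x) = 0 := by
  rcases eq_or_ne x 0 with rfl | hx
  · simp [zero_pow hq.ne']
  rcases hl.lt_or_gt with hneg | hpos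
  · -- l < 0 : the series is entire, differentiate term by term
    have hq0 : (0:ℝ) < q := by exact_mod_cast hq
    have hl0 : 0 < |l| := abs_pos.2 hl
    set R : ℝ := |x| + 1 with hR_def
    have hR1 : 1 ≤ R := by
      have := abs_nonneg x
      simp only [hR_def]; linarith
    have hxmem : x ∈ Metric.ball (0:ℝ) R := by
      simp only [Metric.mem_ball, Real.dist_eq, sub_zero, hR_def]
      linarith
    have hu : Summable (fun i : ℕ => (q : ℝ) * ((2 * R ^ q / (|l| * q)) ^ i /
        (Nat.factorial i : ℝ))) :=
      (Real.summable_pow_div_factorial _).mul_left _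
    have hsum0 : Summable (fun i => zterm q l x i) := by
      apply Summable.of_norm_bounded (Real.summable_pow_div_factorial (R ^ q / (|l| * q)))
      intro i
      rw [Real.norm_eq_abs]
      exact zterm_abs_le q hq hneg hR1 (by linarith [abs_nonneg x]) i
    have hderiv : HasDerivAt (Zq q l) (∑' i, dterm q l x i) x := by
      have := hasDerivAt_tsum_of_isPreconnected hu Metric.isOpen_ball
        (convex_ball (0:ℝ) R).isPreconnected
        (fun i y _ => zterm_hasDerivAt q l i y)
        (fun i y hy => by
          rw [Real.norm_eq_abs]
          have hyR : |y| ≤ R := by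
            simp only [Metric.mem_ball, Real.dist_eq, sub_zero] at hy
            exact hy.le
          exact dterm_abs_le q hq hneg hR1 hyR i)
        hxmem hsum0 hxmem
      exact this
    rw [hderiv.deriv]
    have hZ2 : Zq q l (Real.exp ((q : ℝ) * l) * x)
        = ∑' i, zterm q l (Real.exp ((q : ℝ) * l) * x) i := rfl
    rw [hZ2, ← tsum_mul_left, ← tsum_mul_left, sub_eq_zero]
    have hsumd : Summable (fun i => l * x * dterm q l x i) := by
      apply Summable.mul_left
      apply Summable.of_norm_bounded hu
      intro i
      rw [Real.norm_eq_abs]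
      exact dterm_abs_le q hq hneg hR1 (by linarith [abs_nonneg x]) i
    rw [hsumd.tsum_eq_zero_add]
    have h0 : l * x * dterm q l x 0 = 0 := by
      simp [dterm]
    rw [h0, zero_add]
    exact tsum_congr fun i => key q hq hl x i
  · -- l > 0 : the series diverges away from 0, so Zq vanishes there
    have hzero : ∀ y : ℝ, y ≠ 0 → Zq q l y = 0 := fun y hy =>
      tsum_eq_zero_of_not_summable (not_summable_zterm q hq hpos hy)
    have hev : Zq q l =ᶠ[nhds x] (fun _ => (0:ℝ)) := by
      filter_upwards [isOpen_compl_singleton.mem_nhds hx] with y hy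
      exact hzero y hy
    rw [hev.deriv_eq, deriv_const]
    rw [hzero _ (mul_ne_zero (Real.exp_ne_zero _) hx)]
    ring
end
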